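/- Define η : Π × Π → ℤ by η(α, β) = κ(D_α⁺)(β) if α, β ∈ Σ, and η(α, β) = 0 otherwise, where D_α⁺ denotes the unique element of 𝒟' ∩ 𝒟(α). Then η satisfies the axioms of an admissible map: (AM1) η(α, α) ∈ {0, 1}; (AM2) if η(α, α) = 0 then η(α, β) = η(β, α) = 0 for every β ∈ Π; (AM3) if η(α, β) = 1 then η(α, γ) = η(β, γ) for every γ ∈ Π; (AM4) if η(α, β) < 0 then η(β, α) = 0; (AM5) η(α, β) ≥ ⟨α∨, β⟩ whenever α ≠ β. In particular, η(α, β) ≤ 1 for all α, β, and if all Cartan integers ⟨α∨, β⟩ are ≥ −3 then η takes values in {−3, −2, −1, 0, 1}. -/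

import Mathlib

open scoped RealInnerProductSpace

/-- Let `P` be the set of simple roots, `Sg ⊆ P` the set of spherical
roots of a strongly solvable spherical system with colors `cD` and functionals `κ`,
satisfying axioms (A1)–(A3), and let `cD' ⊆ cD` satisfy conditions (i) and (ii) of the
strong solvability criterion.  Define `η α β = κ (D_α⁺) β` for `α, β ∈ Sg` (where
`D_α⁺` is the unique element of `cD' ∩ 𝒟(α)`) and `η α β = 0` otherwise.  Then `η`
satisfies the axioms (AM1)–(AM5) of an admissible map; in particular `η α β ≤ 1`
always, and if all Cartan integers are ≥ −3 then `η` takes values in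
`{−3, −2, −1, 0, 1}`. -/
theorem spherical_system_gives_admissible_map
    {E : Type*} [NormedAddCommGroup E] [InnerProductSpace ℝ E]
    (P : Finset E)
    (h0 : ∀ α ∈ P, α ≠ (0 : E))
    (hli : LinearIndependent ℝ (fun a : P => (a : E)))
    (hobtuse : ∀ α ∈ P, ∀ β ∈ P, α ≠ β → ⟪α, β⟫ ≤ 0)
    (cart : E → E → ℤ)
    (hcart : ∀ α ∈ P, ∀ β ∈ P, (cart α β : ℝ) = 2 * ⟪α, β⟫ / ⟪α, α⟫)
    (Sg : Finset E) (hSgP : Sg ⊆ P)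
    {D : Type*} (cD : Finset D) (κ : D → E → ℤ)
    (a1 : ∀ d ∈ cD, ∀ s ∈ Sg, κ d s ≤ 1)
    (a2 : ∀ α ∈ Sg, ∃ Dp ∈ cD, ∃ Dm ∈ cD, Dp ≠ Dm ∧ κ Dp α = 1 ∧ κ Dm α = 1 ∧
        (∀ d ∈ cD, κ d α = 1 → d = Dp ∨ d = Dm) ∧
        (∀ β ∈ Sg, κ Dp β + κ Dm β = cart α β))
    (a3 : ∀ d ∈ cD, ∃ α ∈ Sg, κ d α = 1)
    (cD' : Finset D) (hD'sub : cD' ⊆ cD)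
    (hi : ∃ nD : D → ℤ, (∀ d ∈ cD', 0 < nD d) ∧
        ∀ s ∈ Sg, 0 < ∑ d ∈ cD', nD d * κ d s)
    (hii : ∀ α ∈ Sg, ∃! d, d ∈ cD' ∧ κ d α = 1)
    (η : E → E → ℤ)
    (hη1 : ∀ α ∈ Sg, ∀ β ∈ Sg, ∀ d ∈ cD', κ d α = 1 → η α β = κ d β)
    (hη2 : ∀ α β : E, ¬(α ∈ Sg ∧ β ∈ Sg) → η α β = 0) :
    (∀ α ∈ P, η α α = 0 ∨ η α α = 1) ∧
    (∀ α ∈ P, η α α = 0 → ∀ β ∈ P, η α β = 0 ∧ η β α = 0) ∧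
    (∀ α ∈ P, ∀ β ∈ P, η α β = 1 → ∀ γ ∈ P, η α γ = η β γ) ∧
    (∀ α ∈ P, ∀ β ∈ P, η α β < 0 → η β α = 0) ∧
    (∀ α ∈ P, ∀ β ∈ P, α ≠ β → cart α β ≤ η α β) ∧
    (∀ α ∈ P, ∀ β ∈ P, η α β ≤ 1) ∧
    ((∀ α ∈ P, ∀ β ∈ P, α ≠ β → -3 ≤ cart α β) →
      ∀ α ∈ P, ∀ β ∈ P, -3 ≤ η α β ∧ η α β ≤ 1) := by
  classical
  obtain ⟨nD, hnpos, hnsum⟩ := hi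
  -- Cartan integers between distinct simple roots are nonpositive
  have hcartle : ∀ α ∈ P, ∀ β ∈ P, α ≠ β → cart α β ≤ 0 := by
    intro α hα β hβ hne
    have hip : ⟪α, β⟫ ≤ 0 := hobtuse α hα β hβ hne
    have hpos : (0:ℝ) < ⟪α, α⟫ := by
      have h1 : (0:ℝ) ≤ ⟪α, α⟫ := real_inner_self_nonneg
      have h2 : ⟪α, α⟫ ≠ (0:ℝ) := fun h => (h0 α hα) (inner_self_eq_zero.mp h)
      exact lt_of_le_of_ne h1 (Ne.symm h2)
    have hc : (cart α β : ℝ) ≤ 0 := by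
      rw [hcart α hα β hβ]
      apply div_nonpos_of_nonpos_of_nonneg (by linarith) hpos.le
    exact_mod_cast hc
  -- an element of cD' other than the unique chosen color has κ ≤ 0
  have hle0 : ∀ α ∈ Sg, ∀ dα, (dα ∈ cD' ∧ κ dα α = 1) → ∀ d ∈ cD', d ≠ dα → κ d α ≤ 0 := by
    intro α hα dα hdα d hd hne
    have h1 : κ d α ≤ 1 := a1 d (hD'sub hd) α hα
    by_contra h
    push_neg at h
    have h2 : κ d α = 1 := le_antisymm h1 (by omega)
    exact hne ((hii α hα).unique ⟨hd, h2⟩ hdα)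
  -- key bound obtained from condition (i)
  have bound : ∀ α ∈ Sg, ∀ dα, (dα ∈ cD' ∧ κ dα α = 1) →
      ∀ dβ ∈ cD', dβ ≠ dα → κ dβ α < 0 → nD dβ < nD dα := by
    intro α hα dα hdα dβ hdβ hne hneg
    have hpair : ({dα, dβ} : Finset D) ⊆ cD' := by
      intro x hx
      simp only [Finset.mem_insert, Finset.mem_singleton] at hx
      rcases hx with h | h
      · exact h ▸ hdα.1
      · exact h ▸ hdβ
    have hstep : ∑ d ∈ cD', nD d * κ d α ≤ ∑ d ∈ ({dα, dβ} : Finset D), nD d * κ d α := by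
      have h := Finset.sum_le_sum_of_subset_of_nonneg (f := fun d => -(nD d * κ d α)) hpair ?_
      · simp only [Finset.sum_neg_distrib] at h
        linarith
      · intro d hd hnd
        simp only [Finset.mem_insert, Finset.mem_singleton, not_or] at hnd
        have h1 : κ d α ≤ 0 := hle0 α hα dα hdα d hd hnd.1
        have h2 : 0 < nD d := hnpos d hd
        show (0:ℤ) ≤ -(nD d * κ d α)
        nlinarith
    rw [Finset.sum_pair (Ne.symm hne), hdα.2, mul_one] at hstep
    have hsum := hnsum α hα
    have h3 : κ dβ α ≤ -1 := by omega
    have h4 : 0 < nD dβ := hnpos dβ hdβ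
    nlinarith [mul_le_mul_of_nonneg_left h3 h4.le]
  -- two distinct chosen colors cannot be mutually negative
  have keyL : ∀ α ∈ Sg, ∀ β ∈ Sg, ∀ dα, (dα ∈ cD' ∧ κ dα α = 1) →
      ∀ dβ, (dβ ∈ cD' ∧ κ dβ β = 1) → dα ≠ dβ → κ dα β < 0 → κ dβ α < 0 → False := by
    intro α hα β hβ dα hdα dβ hdβ hne h1 h2
    have b1 := bound α hα dα hdα dβ hdβ.1 (Ne.symm hne) h2
    have b2 := bound β hβ dβ hdβ dα hdα.1 hne h1
    omega
  -- the partner color of the chosen color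
  have pairL : ∀ α ∈ Sg, ∀ dα, (dα ∈ cD' ∧ κ dα α = 1) →
      ∃ e ∈ cD, e ∉ cD' ∧ e ≠ dα ∧ κ e α = 1 ∧
        (∀ d ∈ cD, κ d α = 1 → d = dα ∨ d = e) ∧
        (∀ β ∈ Sg, κ dα β + κ e β = cart α β) := by
    intro α hα dα hdα
    obtain ⟨Dp, hDp, Dm, hDm, hpm, hκp, hκm, huq, hsum⟩ := a2 α hα
    have notin : ∀ e, κ e α = 1 → e ≠ dα → e ∉ cD' := by
      intro e h1 h2 he
      exact h2 ((hii α hα).unique ⟨he, h1⟩ hdα)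
    rcases huq dα (hD'sub hdα.1) hdα.2 with h | h
    · subst h
      exact ⟨Dm, hDm, notin Dm hκm (Ne.symm hpm), Ne.symm hpm, hκm,
        fun d hd hh => huq d hd hh, hsum⟩
    · subst h
      refine ⟨Dp, hDp, notin Dp hκp hpm, hpm, hκp,
        fun d hd hh => (huq d hd hh).symm, fun β hβ => ?_⟩
      rw [add_comm]
      exact hsum β hβ
  -- AM5 core for spherical roots
  have am5core : ∀ α ∈ Sg, ∀ β ∈ Sg, α ≠ β → ∀ dα, (dα ∈ cD' ∧ κ dα α = 1) →
      cart α β ≤ κ dα β := by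
    intro α hα β hβ hne dα hdα
    by_contra hcon
    push_neg at hcon
    obtain ⟨dβ, hdβ, -⟩ := hii β hβ
    obtain ⟨e, heD, heD', henedα, hκe, -, hsumα⟩ := pairL α hα dα hdα
    obtain ⟨e', he'D, he'D', he'ne, hκe', huqβ, hsumβ⟩ := pairL β hβ dβ hdβ
    have hsum1 := hsumα β hβ
    have heβ1 : κ e β = 1 := by
      have := a1 e heD β hβ
      omega
    have hee' : e = e' := by
      rcases huqβ e heD heβ1 with h | h
      · exact absurd hdβ.1 (h ▸ heD')
      · exact h
    have hsum2 := hsumβ α hα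
    have hκe'α : κ e' α = 1 := hee' ▸ hκe
    have hcab : cart α β ≤ 0 := hcartle α (hSgP hα) β (hSgP hβ) hne
    have hcba : cart β α ≤ 0 := hcartle β (hSgP hβ) α (hSgP hα) (Ne.symm hne)
    have h1 : κ dα β < 0 := by omega
    have h2 : κ dβ α < 0 := by omega
    have hnedd : dα ≠ dβ := by
      intro h
      rw [h, hdβ.2] at h1
      exact absurd h1 (by norm_num)
    exact keyL α hα β hβ dα hdα dβ hdβ hnedd h1 h2
  -- value description of η on Sg × Sg
  have ηval : ∀ α ∈ Sg, ∀ β ∈ Sg, ∃ dα, (dα ∈ cD' ∧ κ dα α = 1) ∧ η α β = κ dα β := by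
    intro α hα β hβ
    obtain ⟨dα, hdα, -⟩ := hii α hα
    exact ⟨dα, hdα, hη1 α hα β hβ dα hdα.1 hdα.2⟩
  have am1 : ∀ α ∈ P, η α α = 0 ∨ η α α = 1 := by
    intro α hα
    by_cases hαS : α ∈ Sg
    · right
      obtain ⟨d, hd, hval⟩ := ηval α hαS α hαS
      rw [hval, hd.2]
    · left
      exact hη2 α α fun h => hαS h.1
  have am2 : ∀ α ∈ P, η α α = 0 → ∀ β ∈ P, η α β = 0 ∧ η β α = 0 := by
    intro α hα hz β hβ
    have hαS : α ∉ Sg := by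
      intro hs
      obtain ⟨d, hd, hval⟩ := ηval α hs α hs
      rw [hval] at hz
      have := hd.2
      omega
    exact ⟨hη2 α β fun h => hαS h.1, hη2 β α fun h => hαS h.2⟩
  have am3 : ∀ α ∈ P, ∀ β ∈ P, η α β = 1 → ∀ γ ∈ P, η α γ = η β γ := by
    intro α hα β hβ h1 γ hγ
    have hboth : α ∈ Sg ∧ β ∈ Sg := by
      by_contra h
      rw [hη2 α β h] at h1
      exact absurd h1 (by norm_num)
    obtain ⟨hαS, hβS⟩ := hboth
    obtain ⟨dα, hdα, hval⟩ := ηval α hαS β hβS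
    have hκdαβ : κ dα β = 1 := by rw [← hval]; exact h1
    by_cases hγS : γ ∈ Sg
    · rw [hη1 α hαS γ hγS dα hdα.1 hdα.2, hη1 β hβS γ hγS dα hdα.1 hκdαβ]
    · rw [hη2 α γ fun h => hγS h.2, hη2 β γ fun h => hγS h.2]
  have am4 : ∀ α ∈ P, ∀ β ∈ P, η α β < 0 → η β α = 0 := by
    intro α hα β hβ hneg
    have hboth : α ∈ Sg ∧ β ∈ Sg := by
      by_contra h
      rw [hη2 α β h] at hneg
      exact absurd hneg (by norm_num)
    obtain ⟨hαS, hβS⟩ := hboth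
    obtain ⟨dα, hdα, hvalα⟩ := ηval α hαS β hβS
    obtain ⟨dβ, hdβ, hvalβ⟩ := ηval β hβS α hαS
    rw [hvalα] at hneg
    rw [hvalβ]
    have hle : κ dβ α ≤ 1 := a1 dβ (hD'sub hdβ.1) α hαS
    have hne1 : κ dβ α ≠ 1 := by
      intro h
      have hdd : dβ = dα := (hii α hαS).unique ⟨hdβ.1, h⟩ hdα
      rw [← hdd, hdβ.2] at hneg
      exact absurd hneg (by norm_num)
    have hnneg : ¬ κ dβ α < 0 := by
      intro h
      have hnedd : dα ≠ dβ := by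
        intro hh
        rw [hh, hdβ.2] at hneg
        exact absurd hneg (by norm_num)
      exact keyL α hαS β hβS dα hdα dβ hdβ hnedd hneg h
    omega
  have am5 : ∀ α ∈ P, ∀ β ∈ P, α ≠ β → cart α β ≤ η α β := by
    intro α hα β hβ hne
    by_cases hb : α ∈ Sg ∧ β ∈ Sg
    · obtain ⟨dα, hdα, hval⟩ := ηval α hb.1 β hb.2
      rw [hval]
      exact am5core α hb.1 β hb.2 hne dα hdα
    · rw [hη2 α β hb]
      exact hcartle α hα β hβ hne
  have hle1 : ∀ α ∈ P, ∀ β ∈ P, η α β ≤ 1 := by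
    intro α hα β hβ
    by_cases hb : α ∈ Sg ∧ β ∈ Sg
    · obtain ⟨dα, hdα, hval⟩ := ηval α hb.1 β hb.2
      rw [hval]
      exact a1 dα (hD'sub hdα.1) β hb.2
    · rw [hη2 α β hb]
      norm_num
  refine ⟨am1, am2, am3, am4, am5, hle1, ?_⟩
  intro hcb α hα β hβ
  refine ⟨?_, hle1 α hα β hβ⟩
  by_cases h : α = β
  · subst h
    rcases am1 α hα with h | h <;> omega
  · have h1 := am5 α hα β hβ h
    have h2 := hcb α hα β hβ h
    omega
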